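/- Let φ̄, λ̄ > 0 with φ̄ + 2dλ̄ > 1, and let x ∈ ℤ^d with |x| = 1. Then for the branching random walk expectation m(t,x) = E^{δ_0}[ξ_t(x)] given by the series formula, there exists t > 0 such that m(t,x) > 1. In fact, taking t = n, m(n,x) ≥ C·(φ̄+2dλ̄)^n·n^{-(d+1)/2} for n large, where C > 0 depends on λ̄, φ̄, d. -/
import Mathlib


open scoped Classical

/-- `ℓ¹` norm on `ℤ^d`. -/
def normOne {d : ℕ} (x : Fin d → ℤ) : ℕ := ∑ i, (x i).natAbs

/-- `pathCount d n k x` is the number `μ^{(n,k)}(0,x)` of paths on `ℤ^d` from `0` to `x` of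
length `n` using exactly `k` loop-steps. -/
noncomputable def pathCount (d n k : ℕ) (x : Fin d → ℤ) : ℕ :=
  Nat.card {w : Fin (n + 1) → (Fin d → ℤ) //
    w 0 = 0 ∧ w (Fin.last n) = x ∧
    (∀ i : Fin n, normOne (fun t => w i.succ t - w i.castSucc t) ≤ 1) ∧
    (Finset.univ.filter fun i : Fin n => w i.succ = w i.castSucc).card = k}

/-- The branching random walk expectation `m(t,x) = E^{δ₀}[ξ_t(x)]` as a path series. -/
noncomputable def brwSeries (d : ℕ) (phi lam : ℝ) (t : ℝ) (x : Fin d → ℤ) : ℝ :=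
  Real.exp (-t) * ∑' n : ℕ, ∑ k ∈ Finset.range (n - normOne x + 1),
    (pathCount d n k x : ℝ) * phi ^ k * lam ^ (n - k) * t ^ n / (Nat.factorial n)

namespace BRW

variable {d : ℕ}

lemma normOne_eq_zero {x : Fin d → ℤ} : normOne x = 0 ↔ x = 0 := by
  constructor
  · intro h
    funext i
    have := Finset.sum_eq_zero_iff.mp h i (Finset.mem_univ i)
    simpa [Int.natAbs_eq_zero] using this
  · rintro rfl; simp [normOne]

lemma natAbs_le_normOne (x : Fin d → ℤ) (i : Fin d) : (x i).natAbs ≤ normOne x :=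
  Finset.single_le_sum (f := fun j => (x j).natAbs) (fun j _ => Nat.zero_le _)
    (Finset.mem_univ i)

/-- the `2d` unit vectors -/
noncomputable def unitVecs (d : ℕ) : Finset (Fin d → ℤ) :=
  Finset.image (fun p : Fin d × Bool => Pi.single p.1 (if p.2 then (1:ℤ) else -1)) Finset.univ

lemma normOne_single (i : Fin d) (c : ℤ) : normOne (Pi.single i c) = c.natAbs := by
  simp [normOne, Pi.single_apply, apply_ite Int.natAbs, Finset.sum_ite_eq']

lemma uv_inj : Function.Injective
    (fun p : Fin d × Bool => (Pi.single p.1 (if p.2 then (1:ℤ) else -1) : Fin d → ℤ)) := by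
  rintro ⟨i, b⟩ ⟨j, c⟩ h
  simp only at h
  have hi : (Pi.single i (if b then (1:ℤ) else -1) : Fin d → ℤ) i
      = (Pi.single j (if c then (1:ℤ) else -1) : Fin d → ℤ) i := congrFun h i
  have hij : i = j := by
    by_contra hne
    rw [Pi.single_eq_same, Pi.single_eq_of_ne hne] at hi
    cases b <;> simp_all
  subst hij
  rw [Pi.single_eq_same] at hi
  cases b <;> cases c <;> simp_all

lemma mem_unitVecs {y : Fin d → ℤ} : y ∈ unitVecs d ↔ normOne y = 1 := by
  constructor
  · intro hy
    rcases Finset.mem_image.mp hy with ⟨p, _, rfl⟩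
    rw [normOne_single]
    cases hb : p.2 <;> simp
  · intro hy
    have hne : y ≠ 0 := by
      intro h; rw [h] at hy; simp [normOne] at hy
    obtain ⟨i, hi⟩ : ∃ i, y i ≠ 0 := by
      by_contra h; push_neg at h; exact hne (funext fun i => h i)
    have hsplit : (y i).natAbs + ∑ j ∈ Finset.univ.erase i, (y j).natAbs = 1 := by
      rw [Finset.add_sum_erase _ (fun j => (y j).natAbs) (Finset.mem_univ i)]
      exact hy
    have hyi : (y i).natAbs = 1 := by
      have h1 : 1 ≤ (y i).natAbs := Nat.one_le_iff_ne_zero.mpr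
        (fun h => hi (Int.natAbs_eq_zero.mp h))
      omega
    have hrest : ∀ j, j ≠ i → y j = 0 := by
      intro j hj
      have hz : ∑ j ∈ Finset.univ.erase i, (y j).natAbs = 0 := by omega
      have := Finset.sum_eq_zero_iff.mp hz j (Finset.mem_erase.mpr ⟨hj, Finset.mem_univ j⟩)
      exact Int.natAbs_eq_zero.mp this
    have hform : y = Pi.single i (y i) := by
      funext j
      rcases eq_or_ne j i with rfl | hj
      · simp
      · rw [Pi.single_eq_of_ne hj]; exact hrest j hj
    rcases Int.natAbs_eq_iff.mp hyi with h1 | h1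
    · exact Finset.mem_image.mpr ⟨(i, true), Finset.mem_univ _, by rw [hform, h1]; simp⟩
    · exact Finset.mem_image.mpr ⟨(i, false), Finset.mem_univ _, by rw [hform, h1]; simp⟩

lemma notzero_of_mem_unitVecs {y : Fin d → ℤ} (hy : y ∈ unitVecs d) : y ≠ 0 := by
  intro h
  have := mem_unitVecs.mp hy
  rw [h] at this; simp [normOne] at this

lemma abs_le_one_of_mem_unitVecs {y : Fin d → ℤ} (hy : y ∈ unitVecs d) (i : Fin d) :
    |y i| ≤ 1 := by
  have h := mem_unitVecs.mp hy
  have h2 := natAbs_le_normOne y i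
  rw [h] at h2
  rw [Int.abs_eq_natAbs]
  exact_mod_cast h2

lemma card_unitVecs : (unitVecs d).card = 2 * d := by
  rw [unitVecs, Finset.card_image_of_injective _ uv_inj]
  simp [Fintype.card_prod, mul_comm]

lemma sum_unitVecs (f : (Fin d → ℤ) → ℝ) :
    ∑ e ∈ unitVecs d, f e =
      ∑ p : Fin d × Bool, f (Pi.single p.1 (if p.2 then (1:ℤ) else -1)) := by
  rw [unitVecs, Finset.sum_image (fun p _ q _ h => uv_inj h)]

lemma sum_unitVecs_coord (i : Fin d) : ∑ e ∈ unitVecs d, ((e i : ℤ) : ℝ) = 0 := by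
  rw [sum_unitVecs (fun e => ((e i : ℤ) : ℝ)), Fintype.sum_prod_type]
  apply Finset.sum_eq_zero
  intro j _
  rcases eq_or_ne j i with rfl | hj
  · simp
  · simp [Pi.single_apply, hj]

lemma sum_unitVecs_sq (i : Fin d) : ∑ e ∈ unitVecs d, ((e i : ℤ) : ℝ)^2 = 2 := by
  rw [sum_unitVecs (fun e => ((e i : ℤ) : ℝ)^2), Fintype.sum_prod_type]
  have key : ∀ j : Fin d, (∑ b : Bool,
      (((Pi.single j (if b then (1:ℤ) else -1) : Fin d → ℤ) i : ℤ) : ℝ)^2)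
      = if j = i then 2 else 0 := by
    intro j
    rcases eq_or_ne j i with rfl | hj
    · simp
    · simp [Pi.single_apply, hj]
  rw [Finset.sum_congr rfl (fun j _ => key j)]
  simp

/-- unnormalized lazy-walk weights. -/
noncomputable def walkP (d : ℕ) (phi lam : ℝ) : ℕ → (Fin d → ℤ) → ℝ
  | 0 => fun x => if x = 0 then 1 else 0
  | n+1 => fun x => phi * walkP d phi lam n x + lam * ∑ e ∈ unitVecs d, walkP d phi lam n (x - e)

variable {phi lam : ℝ}

lemma walkP_nonneg (hphi : 0 ≤ phi) (hlam : 0 ≤ lam) (n : ℕ) (x : Fin d → ℤ) :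
    0 ≤ walkP d phi lam n x := by
  induction n generalizing x with
  | zero => unfold walkP; positivity
  | succ n ih =>
    unfold walkP
    have h1 := ih x
    have h2 : 0 ≤ ∑ e ∈ unitVecs d, walkP d phi lam n (x - e) :=
      Finset.sum_nonneg fun e _ => ih _
    positivity

lemma walkP_support (n : ℕ) (x : Fin d → ℤ) (h : walkP d phi lam n x ≠ 0) (i : Fin d) :
    |x i| ≤ (n : ℤ) := by
  induction n generalizing x with
  | zero =>
    unfold walkP at h
    by_cases hx : x = 0
    · subst hx; simp
    · simp [hx] at h
  | succ n ih =>
    unfold walkP at h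
    have hor : walkP d phi lam n x ≠ 0 ∨
        (∑ e ∈ unitVecs d, walkP d phi lam n (x - e)) ≠ 0 := by
      by_contra hc
      push_neg at hc
      rw [hc.1, hc.2] at h
      simp at h
    rcases hor with h1 | h2
    · have hle := ih x h1
      push_cast
      omega
    · obtain ⟨e, he, hne⟩ := Finset.exists_ne_zero_of_sum_ne_zero h2
      have h3 := ih (x - e) hne
      have h4 := abs_le_one_of_mem_unitVecs he i
      have hxe : x i = (x - e) i + e i := by simp
      rw [hxe]
      calc |(x - e) i + e i| ≤ |(x - e) i| + |e i| := abs_add_le _ _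
        _ ≤ (↑(n + 1) : ℤ) := by push_cast; omega

end BRW

namespace BRW

variable {d : ℕ} {phi lam : ℝ}

/-- box of radius `n` -/
noncomputable def box (d n : ℕ) : Finset (Fin d → ℤ) :=
  Fintype.piFinset (fun _ : Fin d => Finset.Icc (-(n:ℤ)) n)

lemma mem_box {n : ℕ} {x : Fin d → ℤ} : x ∈ box d n ↔ ∀ i, |x i| ≤ (n:ℤ) := by
  simp [box, Fintype.mem_piFinset, abs_le]

lemma card_box (n : ℕ) : (box d n).card = (2*n+1)^d := by
  rw [box, Fintype.card_piFinset]
  have : ((Finset.Icc (-(n:ℤ)) n).card) = 2*n+1 := by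
    rw [Int.card_Icc]
    omega
  simp [this]

lemma walkP_mem_box {n : ℕ} {x : Fin d → ℤ} (h : walkP d phi lam n x ≠ 0) : x ∈ box d n :=
  mem_box.mpr (walkP_support n x h)

lemma sum_eq_sum_of {f : (Fin d → ℤ) → ℝ} {s t : Finset (Fin d → ℤ)}
    (hs : ∀ x, f x ≠ 0 → x ∈ s) (ht : ∀ x, f x ≠ 0 → x ∈ t) :
    ∑ x ∈ s, f x = ∑ x ∈ t, f x := by
  have h1 : ∑ x ∈ s ∩ t, f x = ∑ x ∈ s, f x :=
    Finset.sum_subset Finset.inter_subset_left (fun x hxs hxn => by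
      by_contra hf
      exact hxn (Finset.mem_inter.mpr ⟨hxs, ht x hf⟩))
  have h2 : ∑ x ∈ s ∩ t, f x = ∑ x ∈ t, f x :=
    Finset.sum_subset Finset.inter_subset_right (fun x hxt hxn => by
      by_contra hf
      exact hxn (Finset.mem_inter.mpr ⟨hs x hf, hxt⟩))
  rw [← h1, h2]

lemma sum_walkP_box {n : ℕ} (q : (Fin d → ℤ) → ℝ) {s : Finset (Fin d → ℤ)}
    (hs : ∀ x, walkP d phi lam n x ≠ 0 → x ∈ s) :
    ∑ x ∈ s, walkP d phi lam n x * q x = ∑ x ∈ box d n, walkP d phi lam n x * q x :=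
  sum_eq_sum_of (fun x hx => hs x (fun h => hx (by rw [h]; ring)))
    (fun x hx => walkP_mem_box (fun h => hx (by rw [h]; ring)))

lemma box_succ_of_box {n : ℕ} : ∀ x, walkP d phi lam n x ≠ 0 → x ∈ box d (n+1) := fun x hx =>
  mem_box.mpr (fun i => le_trans (walkP_support n x hx i) (by push_cast; omega))

/-- shifted sum -/
lemma sum_walkP_shift {n : ℕ} (q : (Fin d → ℤ) → ℝ) {e : Fin d → ℤ}
    (he : e ∈ unitVecs d) :
    ∑ x ∈ box d (n+1), walkP d phi lam n (x - e) * q x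
      = ∑ y ∈ box d n, walkP d phi lam n y * q (y + e) := by
  have hemb : Function.Injective (fun y : Fin d → ℤ => y + e) := fun a b h => by
    simpa using congrArg (fun z => z - e) h
  have hmap : ∑ x ∈ (box d n).map ⟨fun y => y + e, hemb⟩,
      walkP d phi lam n (x - e) * q x
      = ∑ y ∈ box d n, walkP d phi lam n y * q (y + e) := by
    rw [Finset.sum_map]
    apply Finset.sum_congr rfl
    intro y _
    simp
  rw [← hmap]
  apply sum_eq_sum_of
  · intro x hx
    have h1 : walkP d phi lam n (x - e) ≠ 0 := fun h => hx (by rw [h]; ring)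
    have h2 := walkP_support n _ h1
    rw [mem_box]
    intro i
    have h3 := abs_le_one_of_mem_unitVecs he i
    have h4 := h2 i
    have hxe : x i = (x - e) i + e i := by simp
    rw [hxe]
    calc |(x - e) i + e i| ≤ |(x - e) i| + |e i| := abs_add_le _ _
      _ ≤ (↑(n + 1) : ℤ) := by push_cast; omega
  · intro x hx
    have h1 : walkP d phi lam n (x - e) ≠ 0 := fun h => hx (by rw [h]; ring)
    have h2 := walkP_mem_box h1
    rw [Finset.mem_map]
    exact ⟨x - e, h2, by simp⟩

lemma walkP_succ_sum (n : ℕ) (q : (Fin d → ℤ) → ℝ) :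
    ∑ x ∈ box d (n+1), walkP d phi lam (n+1) x * q x
      = phi * (∑ x ∈ box d n, walkP d phi lam n x * q x)
        + lam * ∑ y ∈ box d n, walkP d phi lam n y * (∑ e ∈ unitVecs d, q (y + e)) := by
  have hexp : ∀ x, walkP d phi lam (n+1) x * q x
      = phi * (walkP d phi lam n x * q x)
        + lam * ∑ e ∈ unitVecs d, walkP d phi lam n (x - e) * q x := by
    intro x
    show (phi * walkP d phi lam n x
      + lam * ∑ e ∈ unitVecs d, walkP d phi lam n (x - e)) * q x = _
    rw [add_mul, mul_assoc, mul_assoc, Finset.sum_mul]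
  rw [Finset.sum_congr rfl (fun x _ => hexp x), Finset.sum_add_distrib,
    ← Finset.mul_sum, ← Finset.mul_sum]
  congr 1
  · rw [sum_walkP_box q box_succ_of_box]
  · rw [Finset.sum_comm]
    congr 1
    rw [Finset.sum_congr rfl (fun e he => sum_walkP_shift q he)]
    rw [Finset.sum_comm]
    apply Finset.sum_congr rfl
    intro y _
    rw [Finset.mul_sum]

lemma walkP_mass (n : ℕ) :
    ∑ x ∈ box d n, walkP d phi lam n x = (phi + 2*d*lam)^n := by
  induction n with
  | zero =>
    unfold walkP
    rw [Finset.sum_ite_eq' (box d 0) 0 (fun _ => (1:ℝ))]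
    have : (0 : Fin d → ℤ) ∈ box d 0 := mem_box.mpr (by simp)
    simp [this]
  | succ n ih =>
    have := walkP_succ_sum (d := d) (phi := phi) (lam := lam) n (fun _ => (1:ℝ))
    simp only [mul_one] at this
    rw [Finset.sum_congr rfl (fun y _ => by
        rw [Finset.sum_const, card_unitVecs, nsmul_eq_mul] : 
        ∀ y ∈ box d n, walkP d phi lam n y * (∑ _e ∈ unitVecs d, (1:ℝ))
          = walkP d phi lam n y * ((2*d : ℕ) * 1))] at this
    rw [this, ih]
    rw [← Finset.sum_mul, ih]
    push_cast
    ring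

/-- quadratic weight -/
noncomputable def qw {d : ℕ} (x : Fin d → ℤ) : ℝ := ∑ i, ((x i : ℤ) : ℝ)^2

lemma qw_nonneg (x : Fin d → ℤ) : 0 ≤ qw x := Finset.sum_nonneg fun i _ => sq_nonneg _

lemma qw_shift_sum (y : Fin d → ℤ) :
    ∑ e ∈ unitVecs d, qw (y + e) = 2*d*(qw y) + 2*d := by
  unfold qw
  rw [Finset.sum_comm]
  have inner : ∀ i : Fin d, ∑ e ∈ unitVecs d, (((y + e) i : ℤ) : ℝ)^2
      = 2*d*((y i : ℤ):ℝ)^2 + 2 := by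
    intro i
    have hsplit : ∀ e ∈ unitVecs d, (((y + e) i : ℤ) : ℝ)^2
        = ((y i : ℤ):ℝ)^2 + 2*((y i : ℤ):ℝ) * ((e i : ℤ):ℝ) + ((e i : ℤ):ℝ)^2 := by
      intro e _
      have : ((y + e) i : ℤ) = y i + e i := by simp
      rw [this]
      push_cast
      ring
    rw [Finset.sum_congr rfl hsplit, Finset.sum_add_distrib, Finset.sum_add_distrib,
      Finset.sum_const, card_unitVecs, sum_unitVecs_sq i]
    have : ∑ e ∈ unitVecs d, 2*((y i : ℤ):ℝ) * ((e i : ℤ):ℝ)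
        = 2*((y i : ℤ):ℝ) * ∑ e ∈ unitVecs d, ((e i : ℤ):ℝ) := by
      rw [Finset.mul_sum]
    rw [this, sum_unitVecs_coord i]
    push_cast [nsmul_eq_mul]
    ring
  rw [Finset.sum_congr rfl (fun i (_ : i ∈ Finset.univ) => inner i),
    Finset.sum_add_distrib, Finset.sum_const]
  simp only [Finset.card_univ, Fintype.card_fin, nsmul_eq_mul, Finset.mul_sum]
  rw [← Finset.mul_sum]
  push_cast
  ring

lemma walkP_M2 (hphi : 0 ≤ phi) (hlam : 0 ≤ lam) (n : ℕ) :
    ∑ x ∈ box d n, walkP d phi lam n x * qw x ≤ n * (phi + 2*d*lam)^n := by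
  have hrho : (0:ℝ) ≤ phi + 2*d*lam := by positivity
  induction n with
  | zero =>
    have : ∀ x ∈ box d 0, walkP d phi lam 0 x * qw x = 0 := by
      intro x _
      by_cases hx : x = 0
      · subst hx; simp [walkP, qw]
      · simp [walkP, hx]
    rw [Finset.sum_congr rfl this]
    simp
  | succ n ih =>
    rw [walkP_succ_sum n qw]
    have hcomb : ∀ y ∈ box d n,
        walkP d phi lam n y * (∑ e ∈ unitVecs d, qw (y + e))
        = 2*d*(walkP d phi lam n y * qw y) + 2*d*(walkP d phi lam n y) := by
      intro y _
      rw [qw_shift_sum y]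
      ring
    rw [Finset.sum_congr rfl hcomb, Finset.sum_add_distrib, ← Finset.mul_sum, ← Finset.mul_sum,
      walkP_mass]
    have hM2nonneg : (0:ℝ) ≤ ∑ x ∈ box d n, walkP d phi lam n x * qw x :=
      Finset.sum_nonneg fun x _ => mul_nonneg (walkP_nonneg hphi hlam n x) (qw_nonneg x)
    have h2dlam : 2*(d:ℝ)*lam ≤ phi + 2*d*lam := by linarith
    set A := ∑ x ∈ box d n, walkP d phi lam n x * qw x with hA
    have k1 : phi * A ≤ phi * (n * (phi + 2*d*lam)^n) := mul_le_mul_of_nonneg_left ih hphi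
    have k2 : (lam*(2*d)) * A ≤ (lam*(2*d)) * (n * (phi + 2*d*lam)^n) :=
      mul_le_mul_of_nonneg_left ih (by positivity)
    have k3 : (2*(d:ℝ)*lam) * (phi + 2*d*lam)^n ≤ (phi + 2*d*lam) * (phi + 2*d*lam)^n :=
      mul_le_mul_of_nonneg_right h2dlam (pow_nonneg hrho n)
    push_cast
    nlinarith [k1, k2, k3, pow_succ (phi + 2*(d:ℝ)*lam) n]
end BRW

namespace BRW

variable {d : ℕ} {phi lam : ℝ}

lemma sum_unitVecs_neg (f : (Fin d → ℤ) → ℝ) :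
    ∑ e ∈ unitVecs d, f (-e) = ∑ e ∈ unitVecs d, f e := by
  rw [sum_unitVecs (fun e => f (-e)), sum_unitVecs f,
    Fintype.sum_prod_type, Fintype.sum_prod_type]
  apply Finset.sum_congr rfl
  intro j _
  rw [Fintype.sum_bool, Fintype.sum_bool]
  have h1 : -(Pi.single j (1:ℤ) : Fin d → ℤ) = Pi.single j (-1) := by
    funext t
    rcases eq_or_ne t j with rfl | ht
    · simp
    · simp [Pi.single_eq_of_ne ht]
  have h2 : -(Pi.single j (-1:ℤ) : Fin d → ℤ) = Pi.single j 1 := by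
    funext t
    rcases eq_or_ne t j with rfl | ht
    · simp
    · simp [Pi.single_eq_of_ne ht]
  simp only [Bool.false_eq_true, if_false, if_true]
  rw [h1, h2]
  ring

lemma walkP_neg (n : ℕ) (x : Fin d → ℤ) :
    walkP d phi lam n (-x) = walkP d phi lam n x := by
  induction n generalizing x with
  | zero => unfold walkP; simp [neg_eq_zero]
  | succ n ih =>
    unfold walkP
    congr 1
    · rw [ih x]
    · congr 1
      have h1 : ∀ e ∈ unitVecs d, walkP d phi lam n (-x - e) = walkP d phi lam n (x + e) := by
        intro e _
        have : -x - e = -(x + e) := by ring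
        rw [this, ih]
      rw [Finset.sum_congr rfl h1]
      have h2 := sum_unitVecs_neg (d := d) (fun e => walkP d phi lam n (x - e))
      simp only [sub_neg_eq_add] at h2
      exact h2

lemma walkP_conv (m : ℕ) : ∀ (n : ℕ) (z : Fin d → ℤ),
    walkP d phi lam (m + n) z
      = ∑ y ∈ box d m, walkP d phi lam m y * walkP d phi lam n (z - y) := by
  intro n
  induction n with
  | zero =>
    intro z
    have hz : ∀ y ∈ box d m, walkP d phi lam m y * walkP d phi lam 0 (z - y)
        = if y = z then walkP d phi lam m y else 0 := by
      intro y _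
      show walkP d phi lam m y * (if z - y = 0 then 1 else 0) = _
      by_cases h : y = z
      · subst h; simp
      · have hzy : z - y ≠ 0 := sub_ne_zero.mpr (fun hzz => h hzz.symm)
        simp [hzy, h]
    rw [Finset.sum_congr rfl hz, Finset.sum_ite_eq' (box d m) z]
    by_cases hz2 : z ∈ box d m
    · simp [hz2]
    · simp only [hz2, if_false]
      by_contra hne
      exact hz2 (walkP_mem_box hne)
  | succ n ih =>
    intro z
    show phi * walkP d phi lam (m + n) z
        + lam * ∑ e ∈ unitVecs d, walkP d phi lam (m + n) (z - e) = _
    rw [ih z, Finset.sum_congr rfl (fun e (_ : e ∈ unitVecs d) => ih (z - e))]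
    have hswap : ∑ e ∈ unitVecs d, ∑ y ∈ box d m,
        walkP d phi lam m y * walkP d phi lam n (z - e - y)
        = ∑ y ∈ box d m, walkP d phi lam m y
            * ∑ e ∈ unitVecs d, walkP d phi lam n (z - y - e) := by
      rw [Finset.sum_comm]
      apply Finset.sum_congr rfl
      intro y _
      rw [Finset.mul_sum]
      apply Finset.sum_congr rfl
      intro e _
      rw [sub_right_comm]
    rw [hswap, Finset.mul_sum, Finset.mul_sum, ← Finset.sum_add_distrib]
    apply Finset.sum_congr rfl
    intro y _
    show phi * (walkP d phi lam m y * walkP d phi lam n (z - y))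
        + lam * (walkP d phi lam m y * ∑ e ∈ unitVecs d, walkP d phi lam n (z - y - e))
        = walkP d phi lam m y * (phi * walkP d phi lam n (z - y)
            + lam * ∑ e ∈ unitVecs d, walkP d phi lam n (z - y - e))
    ring

lemma sq_sum_le (n : ℕ) (t : Finset (Fin d → ℤ)) :
    ∑ z ∈ t, (walkP d phi lam n z)^2 ≤ ∑ z ∈ box d n, (walkP d phi lam n z)^2 := by
  have h1 : ∑ z ∈ t ∩ box d n, (walkP d phi lam n z)^2 = ∑ z ∈ t, (walkP d phi lam n z)^2 :=
    Finset.sum_subset Finset.inter_subset_left (fun z hz hzn => by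
      by_cases h : walkP d phi lam n z = 0
      · rw [h]; ring
      · exact absurd (Finset.mem_inter.mpr ⟨hz, walkP_mem_box h⟩) hzn)
  rw [← h1]
  exact Finset.sum_le_sum_of_subset_of_nonneg Finset.inter_subset_right
    (fun z _ _ => sq_nonneg _)

lemma walkP_even_le (hphi : 0 ≤ phi) (hlam : 0 ≤ lam) (m : ℕ) (x : Fin d → ℤ) :
    walkP d phi lam (m + m) x ≤ walkP d phi lam (m + m) 0 := by
  have hS0 : walkP d phi lam (m + m) 0 = ∑ y ∈ box d m, (walkP d phi lam m y)^2 := by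
    rw [walkP_conv m m 0]
    apply Finset.sum_congr rfl
    intro y _
    rw [zero_sub, walkP_neg]
    ring
  rw [hS0, walkP_conv m m x]
  have hinj : Function.Injective (fun y : Fin d → ℤ => x - y) := fun a b h => by
    simpa using congrArg (fun z => x - z) h
  have hT : ∑ y ∈ box d m, (walkP d phi lam m (x - y))^2
      ≤ ∑ z ∈ box d m, (walkP d phi lam m z)^2 := by
    have hmap : ∑ z ∈ (box d m).map ⟨fun y => x - y, hinj⟩, (walkP d phi lam m z)^2
        = ∑ y ∈ box d m, (walkP d phi lam m (x - y))^2 := Finset.sum_map _ _ _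
    rw [← hmap]
    exact sq_sum_le m _
  calc ∑ y ∈ box d m, walkP d phi lam m y * walkP d phi lam m (x - y)
      ≤ ∑ y ∈ box d m, ((walkP d phi lam m y)^2 + (walkP d phi lam m (x - y))^2)/2 := by
        apply Finset.sum_le_sum
        intro y _
        nlinarith [sq_nonneg (walkP d phi lam m y - walkP d phi lam m (x - y))]
    _ = ((∑ y ∈ box d m, (walkP d phi lam m y)^2)
          + ∑ y ∈ box d m, (walkP d phi lam m (x - y))^2)/2 := by
        rw [← Finset.sum_add_distrib, Finset.sum_div]
    _ ≤ ∑ y ∈ box d m, (walkP d phi lam m y)^2 := by linarith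

lemma walkP_zero_lb (hphi : 0 < phi) (hlam : 0 < lam) (m : ℕ) (hm : 1 ≤ m) :
    (phi + 2*d*lam)^(m+m) / (2 * ((7:ℝ) * Real.sqrt m)^d)
      ≤ walkP d phi lam (m+m) 0 := by
  have hphi' := le_of_lt hphi
  have hlam' := le_of_lt hlam
  have hrho : (0:ℝ) ≤ phi + 2*d*lam := by positivity
  set N := m + m with hN
  set R : ℕ := ⌈2*Real.sqrt m⌉₊ with hR
  set p0 := walkP d phi lam N 0 with hp0
  have hsqrt1 : (1:ℝ) ≤ Real.sqrt m := by
    rw [show (1:ℝ) = Real.sqrt 1 by simp]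
    exact Real.sqrt_le_sqrt (by exact_mod_cast hm)
  have hRge : (2:ℝ)*Real.sqrt m ≤ R := Nat.le_ceil _
  have hRlt : (R:ℝ) < 2*Real.sqrt m + 1 := Nat.ceil_lt_add_one (by positivity)
  have hRsq : (4:ℝ)*m ≤ (R:ℝ)^2 := by
    have h4 : ((2:ℝ)*Real.sqrt m)^2 = 4*m := by
      rw [mul_pow, Real.sq_sqrt (by positivity : (0:ℝ) ≤ (m:ℝ))]
      norm_num
    calc (4:ℝ)*m = ((2:ℝ)*Real.sqrt m)^2 := h4.symm
      _ ≤ (R:ℝ)^2 := by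
          apply pow_le_pow_left₀ (by positivity) hRge
  have hRpos : (0:ℝ) < (R:ℝ)^2 := by nlinarith
  -- split mass
  have hsplit := Finset.sum_filter_add_sum_filter_not (box d N)
    (fun x => x ∈ box d R) (walkP d phi lam N)
  have hmass := walkP_mass (d := d) (phi := phi) (lam := lam) N
  -- out part
  have hout : ∑ x ∈ (box d N).filter (fun x => x ∉ box d R), walkP d phi lam N x
      ≤ (N:ℝ) * (phi + 2*d*lam)^N / (R:ℝ)^2 := by
    have hstep : ∀ x ∈ (box d N).filter (fun x => x ∉ box d R),
        walkP d phi lam N x ≤ walkP d phi lam N x * qw x / (R:ℝ)^2 := by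
      intro x hx
      rcases Finset.mem_filter.mp hx with ⟨_, hxR⟩
      obtain ⟨i, hi⟩ : ∃ i, ¬ (|x i| ≤ (R:ℤ)) := by
        by_contra hc
        push_neg at hc
        exact hxR (mem_box.mpr hc)
      push_neg at hi
      have habs : (R:ℝ) ≤ |((x i : ℤ) : ℝ)| := by
        rw [← Int.cast_abs]
        exact_mod_cast le_of_lt hi
      have hsq : (R:ℝ)^2 ≤ ((x i : ℤ) : ℝ)^2 := by
        calc (R:ℝ)^2 ≤ |((x i : ℤ) : ℝ)|^2 := pow_le_pow_left₀ (by positivity) habs 2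
          _ = ((x i : ℤ) : ℝ)^2 := sq_abs _
      have hqw : (R:ℝ)^2 ≤ qw x :=
        le_trans hsq (Finset.single_le_sum (f := fun i => ((x i : ℤ):ℝ)^2)
          (fun j _ => sq_nonneg _) (Finset.mem_univ i))
      rw [le_div_iff₀ hRpos]
      exact mul_le_mul_of_nonneg_left hqw (walkP_nonneg hphi' hlam' N x)
    calc ∑ x ∈ (box d N).filter (fun x => x ∉ box d R), walkP d phi lam N x
        ≤ ∑ x ∈ (box d N).filter (fun x => x ∉ box d R), walkP d phi lam N x * qw x / (R:ℝ)^2 :=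
          Finset.sum_le_sum hstep
      _ = (∑ x ∈ (box d N).filter (fun x => x ∉ box d R), walkP d phi lam N x * qw x) / (R:ℝ)^2 := by
          rw [Finset.sum_div]
      _ ≤ (∑ x ∈ box d N, walkP d phi lam N x * qw x) / (R:ℝ)^2 := by
          apply div_le_div_of_nonneg_right ?_ hRpos.le
          exact Finset.sum_le_sum_of_subset_of_nonneg (Finset.filter_subset _ _)
            (fun x _ _ => mul_nonneg (walkP_nonneg hphi' hlam' N x) (qw_nonneg x))
      _ ≤ (N:ℝ) * (phi + 2*d*lam)^N / (R:ℝ)^2 :=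
          div_le_div_of_nonneg_right (walkP_M2 hphi' hlam' N) hRpos.le
  -- in part
  have hin : ∑ x ∈ (box d N).filter (fun x => x ∈ box d R), walkP d phi lam N x
      ≤ ((2*R+1:ℕ)^d : ℝ) * p0 := by
    have h1 : ∀ x ∈ (box d N).filter (fun x => x ∈ box d R),
        walkP d phi lam N x ≤ p0 := fun x _ => walkP_even_le hphi' hlam' m x
    calc ∑ x ∈ (box d N).filter (fun x => x ∈ box d R), walkP d phi lam N x
        ≤ ((box d N).filter (fun x => x ∈ box d R)).card • p0 :=
          Finset.sum_le_card_nsmul _ _ _ h1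
      _ ≤ ((box d R).card : ℝ) * p0 := by
          rw [nsmul_eq_mul]
          have hsub : (box d N).filter (fun x => x ∈ box d R) ⊆ box d R :=
            fun x hx => (Finset.mem_filter.mp hx).2
          have hcard := Finset.card_le_card hsub
          have hp0 : 0 ≤ p0 := walkP_nonneg hphi' hlam' N 0
          exact mul_le_mul_of_nonneg_right (by exact_mod_cast hcard) hp0
      _ = ((2*R+1:ℕ)^d : ℝ) * p0 := by rw [card_box]; push_cast; ring
  -- combine
  have hNR : (N:ℝ) * (phi + 2*d*lam)^N / (R:ℝ)^2 ≤ (phi + 2*d*lam)^N / 2 := by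
    rw [div_le_div_iff₀ hRpos (by norm_num : (0:ℝ) < 2)]
    have hpow : (0:ℝ) ≤ (phi + 2*d*lam)^N := pow_nonneg hrho N
    have hNval : (N:ℝ) = 2*m := by rw [hN]; push_cast; ring
    nlinarith
  have hkey : (phi + 2*d*lam)^N / 2 ≤ ((2*R+1:ℕ)^d : ℝ) * p0 := by
    have := hsplit
    rw [hmass] at this
    linarith [hout, hin]
  -- denominators
  have hcard_le : ((2*R+1:ℕ)^d : ℝ) ≤ ((7:ℝ) * Real.sqrt m)^d := by
    apply pow_le_pow_left₀ (by positivity)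
    push_cast
    nlinarith
  have hcard_pos : (0:ℝ) < ((2*R+1:ℕ)^d : ℝ) := by positivity
  have hbig_pos : (0:ℝ) < ((7:ℝ) * Real.sqrt m)^d := by positivity
  have hp0pos : (phi + 2*d*lam)^N / (2 * ((2*R+1:ℕ)^d : ℝ)) ≤ p0 := by
    rw [div_le_iff₀ (by positivity)]
    calc (phi + 2*d*lam)^N ≤ 2 * (((2*R+1:ℕ)^d : ℝ) * p0) := by linarith
      _ = p0 * (2 * ((2*R+1:ℕ)^d : ℝ)) := by ring
  calc (phi + 2*d*lam)^(m+m) / (2 * ((7:ℝ) * Real.sqrt m)^d)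
      ≤ (phi + 2*d*lam)^N / (2 * ((2*R+1:ℕ)^d : ℝ)) := by
        apply div_le_div_of_nonneg_left (pow_nonneg hrho N) (by positivity)
        nlinarith
    _ ≤ p0 := hp0pos

end BRW

namespace BRW

variable {d : ℕ}

def PathProp (d n k : ℕ) (x : Fin d → ℤ) (w : Fin (n + 1) → (Fin d → ℤ)) : Prop :=
  w 0 = 0 ∧ w (Fin.last n) = x ∧
    (∀ i : Fin n, normOne (fun t => w i.succ t - w i.castSucc t) ≤ 1) ∧
    (Finset.univ.filter fun i : Fin n => w i.succ = w i.castSucc).card = k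

lemma normOne_triangle (a b : Fin d → ℤ) :
    normOne a ≤ normOne b + normOne (fun t => a t - b t) := by
  unfold normOne
  rw [← Finset.sum_add_distrib]
  apply Finset.sum_le_sum
  intro i _
  have h : a i = b i + (a i - b i) := by ring
  calc (a i).natAbs = (b i + (a i - b i)).natAbs := by rw [← h]
    _ ≤ (b i).natAbs + (a i - b i).natAbs := Int.natAbs_add_le _ _

lemma path_norm_loop {n : ℕ} {w : Fin (n+1) → Fin d → ℤ} (h0 : w 0 = 0)
    (hstep : ∀ i : Fin n, normOne (fun t => w i.succ t - w i.castSucc t) ≤ 1) :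
    ∀ j : ℕ, ∀ hj : j ≤ n,
      normOne (w ⟨j, Nat.lt_succ_of_le hj⟩)
        + (Finset.univ.filter fun i : Fin n =>
            (i:ℕ) < j ∧ w i.succ = w i.castSucc).card ≤ j := by
  intro j
  induction j with
  | zero =>
    intro hj
    have h1 : (⟨0, Nat.lt_succ_of_le hj⟩ : Fin (n+1)) = 0 := rfl
    rw [h1, h0]
    have h2 : (Finset.univ.filter fun i : Fin n =>
        (i:ℕ) < 0 ∧ w i.succ = w i.castSucc) = ∅ := by
      apply Finset.filter_false_of_mem
      intro i _
      simp
    rw [h2]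
    simp [normOne]
  | succ j ihj =>
    intro hj
    have hjn : j < n := hj
    set i0 : Fin n := ⟨j, hjn⟩ with hi0
    have hcard : (Finset.univ.filter fun i : Fin n =>
          (i:ℕ) < j+1 ∧ w i.succ = w i.castSucc).card
        = (Finset.univ.filter fun i : Fin n =>
            (i:ℕ) < j ∧ w i.succ = w i.castSucc).card
          + (if w i0.succ = w i0.castSucc then 1 else 0) := by
      rw [Finset.card_filter, Finset.card_filter]
      have key : ∀ i : Fin n, (if ((i:ℕ) < j+1 ∧ w i.succ = w i.castSucc) then (1:ℕ) else 0)
          = (if ((i:ℕ) < j ∧ w i.succ = w i.castSucc) then 1 else 0)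
            + (if (i = i0 ∧ w i.succ = w i.castSucc) then 1 else 0) := by
        intro i
        have hi0v : (i0:ℕ) = j := rfl
        have hiff : (i = i0) ↔ ((i:ℕ) = j) := by rw [Fin.ext_iff, hi0v]
        by_cases hL : w i.succ = w i.castSucc
        · simp only [hL, and_true]
          by_cases hij : i = i0
          · have hv := hiff.mp hij
            simp only [if_pos hij]
            split_ifs <;> omega
          · have hv : ¬ (i:ℕ) = j := fun hc => hij (hiff.mpr hc)
            simp only [if_neg hij, add_zero]
            split_ifs <;> omega
        · simp [hL]
      rw [Finset.sum_congr rfl (fun i _ => key i), Finset.sum_add_distrib]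
      congr 1
      have h3 : ∀ i : Fin n, (if (i = i0 ∧ w i.succ = w i.castSucc) then (1:ℕ) else 0)
          = if i = i0 then (if w i0.succ = w i0.castSucc then 1 else 0) else 0 := by
        intro i
        by_cases h1 : i = i0
        · subst h1; simp
        · simp [h1]
      rw [Finset.sum_congr rfl (fun i _ => h3 i), Finset.sum_ite_eq' Finset.univ i0]
      simp
    rw [hcard]
    have hih := ihj (le_of_lt hjn)
    by_cases hL : w i0.succ = w i0.castSucc
    · rw [if_pos hL]
      have hnorm : normOne (w (⟨j+1, Nat.lt_succ_of_le hj⟩ : Fin (n+1)))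
          = normOne (w (⟨j, Nat.lt_succ_of_le (le_of_lt hjn)⟩ : Fin (n+1))) :=
        congrArg normOne hL
      omega
    · rw [if_neg hL]
      have htri := normOne_triangle (w i0.succ) (w i0.castSucc)
      have hst := hstep i0
      have hcs : w i0.castSucc = w (⟨j, Nat.lt_succ_of_le (le_of_lt hjn)⟩ : Fin (n+1)) := rfl
      have hsc : w i0.succ = w (⟨j+1, Nat.lt_succ_of_le hj⟩ : Fin (n+1)) := rfl
      rw [hcs, hsc] at htri hst
      omega

lemma path_total {n k : ℕ} {x : Fin d → ℤ} {w : Fin (n+1) → Fin d → ℤ}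
    (h : PathProp d n k x w) : normOne x + k ≤ n := by
  obtain ⟨h0, hlast, hstep, hcount⟩ := h
  have := path_norm_loop h0 hstep n le_rfl
  have hfe : (Finset.univ.filter fun i : Fin n =>
      (i:ℕ) < n ∧ w i.succ = w i.castSucc)
      = (Finset.univ.filter fun i : Fin n => w i.succ = w i.castSucc) := by
    apply Finset.filter_congr
    intro i _
    simp [i.isLt]
  rw [hfe, hcount] at this
  have hx : w (⟨n, Nat.lt_succ_of_le le_rfl⟩ : Fin (n+1)) = x := hlast
  rw [hx] at this
  exact this

lemma path_coord_le {n k : ℕ} {x : Fin d → ℤ} {w : Fin (n+1) → Fin d → ℤ}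
    (h : PathProp d n k x w) (j : Fin (n+1)) (t : Fin d) : (w j t).natAbs ≤ n := by
  obtain ⟨h0, _, hstep, _⟩ := h
  have h1 := path_norm_loop h0 hstep (j : ℕ) (Nat.lt_succ_iff.mp j.isLt)
  have h2 : (⟨(j:ℕ), Nat.lt_succ_of_le (Nat.lt_succ_iff.mp j.isLt)⟩ : Fin (n+1)) = j :=
    Fin.ext rfl
  rw [h2] at h1
  have h3 := natAbs_le_normOne (w j) t
  have h4 : (j : ℕ) ≤ n := Nat.lt_succ_iff.mp j.isLt
  omega

lemma path_finite (n k : ℕ) (x : Fin d → ℤ) :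
    Finite {w : Fin (n+1) → Fin d → ℤ // PathProp d n k x w} := by
  haveI : Finite ↥(Set.Icc (-(n:ℤ)) (n:ℤ)) := (Set.finite_Icc _ _).to_subtype
  apply Finite.of_injective
    (f := fun (w : {w : Fin (n+1) → Fin d → ℤ // PathProp d n k x w}) =>
      (fun j t => (⟨w.1 j t, by
        have := path_coord_le w.2 j t
        constructor <;> omega⟩ : Set.Icc (-(n:ℤ)) (n:ℤ)) :
          Fin (n+1) → Fin d → Set.Icc (-(n:ℤ)) (n:ℤ)))
  intro w1 w2 hw
  apply Subtype.ext
  funext j t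
  have := congrFun (congrFun hw j) t
  exact Subtype.ext_iff.mp this

lemma pathCount_def (d n k : ℕ) (x : Fin d → ℤ) :
    pathCount d n k x = Nat.card {w : Fin (n+1) → Fin d → ℤ // PathProp d n k x w} := rfl

lemma pathCount_vanish {n k : ℕ} {x : Fin d → ℤ} (h : n < normOne x + k) :
    pathCount d n k x = 0 := by
  rw [pathCount_def]
  haveI : IsEmpty {w : Fin (n+1) → Fin d → ℤ // PathProp d n k x w} :=
    ⟨fun w => absurd (path_total w.2) (by omega)⟩
  exact Nat.card_of_isEmpty

lemma pathCount_zero_len (k : ℕ) (x : Fin d → ℤ) :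
    pathCount d 0 k x = if x = 0 ∧ k = 0 then 1 else 0 := by
  rw [pathCount_def]
  have hfilter : (Finset.univ.filter fun i : Fin 0 =>
      (fun w : Fin 1 → Fin d → ℤ => w i.succ = w i.castSucc) i) = ∅ := by
    apply Finset.eq_empty_of_forall_notMem
    intro i
    exact absurd i.isLt (by omega)
  by_cases hx : x = 0 ∧ k = 0
  · obtain ⟨hx0, hk0⟩ := hx
    subst hx0; subst hk0
    rw [if_pos ⟨rfl, rfl⟩]
    haveI : Nonempty {w : Fin 1 → Fin d → ℤ // PathProp d 0 0 0 w} := by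
      refine ⟨⟨fun _ => 0, rfl, rfl, fun i => absurd i.isLt (by omega), ?_⟩⟩
      rw [Finset.card_eq_zero]
      apply Finset.eq_empty_of_forall_notMem
      intro i _
      exact absurd i.isLt (by omega)
    haveI : Subsingleton {w : Fin 1 → Fin d → ℤ // PathProp d 0 0 0 w} := by
      constructor
      rintro ⟨w1, hw1, -, -, -⟩ ⟨w2, hw2, -, -, -⟩
      apply Subtype.ext
      funext j
      have hj : j = 0 := Subsingleton.elim j 0
      show w1 j = w2 j
      rw [hj, hw1, hw2]
    exact Nat.card_unique
  · rw [if_neg hx]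
    haveI : IsEmpty {w : Fin 1 → Fin d → ℤ // PathProp d 0 k x w} := by
      constructor
      rintro ⟨w, hw0, hwlast, -, hwcount⟩
      apply hx
      constructor
      · rw [← hwlast]
        have : (Fin.last 0) = (0 : Fin 1) := rfl
        rw [this, hw0]
      · rw [← hwcount, Finset.card_eq_zero]
        apply Finset.eq_empty_of_forall_notMem
        intro i _
        exact absurd i.isLt (by omega)
    exact Nat.card_of_isEmpty

end BRW

namespace BRW

variable {d : ℕ}

lemma loopcount_snoc {n : ℕ} (w : Fin (n+1+1) → Fin d → ℤ) :
    (Finset.univ.filter fun i : Fin (n+1) => w i.succ = w i.castSucc).card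
      = (Finset.univ.filter fun i : Fin n =>
          (Fin.init w) i.succ = (Fin.init w) i.castSucc).card
        + (if w (Fin.last n).succ = w (Fin.last n).castSucc then 1 else 0) := by
  rw [Finset.card_filter, Finset.card_filter, Fin.sum_univ_castSucc]
  congr 1

lemma init_pathProp {n : ℕ} {w : Fin (n+1+1) → Fin d → ℤ}
    (h0 : w 0 = 0)
    (hstep : ∀ i : Fin (n+1), normOne (fun t => w i.succ t - w i.castSucc t) ≤ 1) :
    (Fin.init w) 0 = 0 ∧
      (∀ i : Fin n, normOne (fun t => (Fin.init w) i.succ t - (Fin.init w) i.castSucc t) ≤ 1) := by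
  constructor
  · show w (Fin.castSucc 0) = 0
    rw [Fin.castSucc_zero]; exact h0
  · intro i
    have hs := hstep i.castSucc
    have h1 : w (Fin.castSucc i).succ = Fin.init w i.succ := by
      rw [Fin.succ_castSucc]; rfl
    have h2 : w (Fin.castSucc i).castSucc = Fin.init w i.castSucc := rfl
    rw [h1, h2] at hs
    exact hs

lemma snoc_pathProp {n k : ℕ} {x y : Fin d → ℤ} {w' : Fin (n+1) → Fin d → ℤ}
    (h : PathProp d n k (x - y) w') (hy : normOne y ≤ 1) :
    (Fin.snoc w' x : Fin (n+1+1) → Fin d → ℤ) 0 = 0 ∧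
      (Fin.snoc w' x : Fin (n+1+1) → Fin d → ℤ) (Fin.last (n+1)) = x ∧
      (∀ i : Fin (n+1), normOne (fun t => (Fin.snoc w' x : Fin (n+1+1) → Fin d → ℤ) i.succ t
        - (Fin.snoc w' x : Fin (n+1+1) → Fin d → ℤ) i.castSucc t) ≤ 1) := by
  obtain ⟨h0, hlast, hstep, _⟩ := h
  refine ⟨?_, ?_, ?_⟩
  · show (Fin.snoc w' x : Fin (n+1+1) → Fin d → ℤ) 0 = 0
    rw [← Fin.castSucc_zero, Fin.snoc_castSucc]
    exact h0
  · exact Fin.snoc_last _ _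
  · intro i
    induction i using Fin.lastCases with
    | last =>
      have e1 : (Fin.snoc w' x : Fin (n+1+1) → Fin d → ℤ) (Fin.last n).succ = x :=
        Fin.snoc_last _ _
      have e2 : (Fin.snoc w' x : Fin (n+1+1) → Fin d → ℤ) (Fin.last n).castSucc
          = x - y := by
        rw [Fin.snoc_castSucc]; exact hlast
      rw [e1, e2]
      have hfun : (fun t => x t - (x - y) t) = y := by
        funext t; simp
      rw [hfun]
      exact hy
    | cast j =>
      have e1 : (Fin.snoc w' x : Fin (n+1+1) → Fin d → ℤ) (Fin.castSucc j).succ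
          = w' j.succ := by
        rw [Fin.succ_castSucc]; exact Fin.snoc_castSucc _ _ _
      have e2 : (Fin.snoc w' x : Fin (n+1+1) → Fin d → ℤ) (Fin.castSucc j).castSucc
          = w' j.castSucc := Fin.snoc_castSucc _ _ _
      rw [e1, e2]
      exact hstep j

/-- equivalence for paths ending with a loop step -/
noncomputable def loopEquiv (n k : ℕ) (x : Fin d → ℤ) :
    {w : Fin (n+1+1) → Fin d → ℤ // PathProp d (n+1) (k+1) x w
        ∧ w (Fin.last n).succ = w (Fin.last n).castSucc}
      ≃ {w' : Fin (n+1) → Fin d → ℤ // PathProp d n k x w'} where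
  toFun w := ⟨Fin.init w.1, by
    obtain ⟨⟨h0, hlast, hstep, hcount⟩, hL⟩ := w.2
    obtain ⟨hi0, histep⟩ := init_pathProp h0 hstep
    refine ⟨hi0, ?_, histep, ?_⟩
    · show w.1 ((Fin.last n).castSucc) = x
      rw [← hL]
      exact hlast
    · have hls := loopcount_snoc w.1
      rw [hcount, if_pos hL] at hls
      omega⟩
  invFun w' := ⟨Fin.snoc w'.1 x, by
    have hy : normOne (0 : Fin d → ℤ) ≤ 1 := by
      rw [normOne_eq_zero.mpr rfl]
      omega
    have h' : PathProp d n k (x - 0) w'.1 := by rw [sub_zero]; exact w'.2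
    obtain ⟨h0, hlast, hstep⟩ := snoc_pathProp h' hy
    have hend : (Fin.snoc w'.1 x : Fin (n+1+1) → Fin d → ℤ) (Fin.last n).succ
        = (Fin.snoc w'.1 x : Fin (n+1+1) → Fin d → ℤ) (Fin.last n).castSucc := by
      have ha : (Fin.snoc w'.1 x : Fin (n+1+1) → Fin d → ℤ) (Fin.last n).succ = x :=
        Fin.snoc_last _ _
      have hb : (Fin.snoc w'.1 x : Fin (n+1+1) → Fin d → ℤ) (Fin.last n).castSucc
          = w'.1 (Fin.last n) := Fin.snoc_castSucc _ _ _
      rw [ha, hb]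
      exact (w'.2.2.1).symm
    refine ⟨⟨h0, hlast, hstep, ?_⟩, hend⟩
    rw [loopcount_snoc, if_pos hend, Fin.init_snoc]
    rw [w'.2.2.2.2]⟩
  left_inv w := by
    obtain ⟨w, hw⟩ := w
    apply Subtype.ext
    show Fin.snoc (Fin.init w) x = w
    rw [← hw.1.2.1]
    exact Fin.snoc_init_self w
  right_inv w' := by
    apply Subtype.ext
    show Fin.init (Fin.snoc w'.1 x : Fin (n+1+1) → Fin d → ℤ) = w'.1
    funext i
    exact Fin.snoc_castSucc _ _ i

/-- equivalence for paths ending with a moving step -/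
noncomputable def moveEquiv (n k : ℕ) (x : Fin d → ℤ) :
    {w : Fin (n+1+1) → Fin d → ℤ // PathProp d (n+1) k x w
        ∧ ¬ (w (Fin.last n).succ = w (Fin.last n).castSucc)}
      ≃ {p : ↥(unitVecs d) × (Fin (n+1) → Fin d → ℤ) //
          PathProp d n k (x - (p.1 : Fin d → ℤ)) p.2} where
  toFun w := ⟨(⟨x - w.1 ((Fin.last n).castSucc), by
      obtain ⟨⟨h0, hlast, hstep, hcount⟩, hL⟩ := w.2
      have hxlast : w.1 (Fin.last n).succ = x := hlast
      rw [mem_unitVecs]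
      have hs := hstep (Fin.last n)
      rw [hxlast] at hs hL
      have hfun : (fun t => x t - w.1 (Fin.last n).castSucc t)
          = x - w.1 ((Fin.last n).castSucc) := rfl
      rw [hfun] at hs
      have hne : x - w.1 ((Fin.last n).castSucc) ≠ 0 := by
        intro hc
        exact hL (sub_eq_zero.mp hc)
      have hnz : normOne (x - w.1 ((Fin.last n).castSucc)) ≠ 0 :=
        fun h => hne (normOne_eq_zero.mp h)
      omega⟩, Fin.init w.1), by
    obtain ⟨⟨h0, hlast, hstep, hcount⟩, hL⟩ := w.2
    obtain ⟨hi0, histep⟩ := init_pathProp h0 hstep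
    refine ⟨hi0, ?_, histep, ?_⟩
    · show w.1 ((Fin.last n).castSucc) = x - (x - w.1 ((Fin.last n).castSucc))
      rw [sub_sub_cancel]
    · have hls := loopcount_snoc w.1
      rw [hcount, if_neg hL, add_zero] at hls
      exact hls.symm⟩
  invFun p := ⟨Fin.snoc p.1.2 x, by
    have hy : normOne (p.1.1 : Fin d → ℤ) ≤ 1 :=
      le_of_eq (mem_unitVecs.mp p.1.1.2)
    obtain ⟨h0, hlast, hstep⟩ := snoc_pathProp p.2 hy
    have hne : (p.1.1 : Fin d → ℤ) ≠ 0 := notzero_of_mem_unitVecs p.1.1.2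
    have hnotend : ¬ ((Fin.snoc p.1.2 x : Fin (n+1+1) → Fin d → ℤ) (Fin.last n).succ
        = (Fin.snoc p.1.2 x : Fin (n+1+1) → Fin d → ℤ) (Fin.last n).castSucc) := by
      have ha : (Fin.snoc p.1.2 x : Fin (n+1+1) → Fin d → ℤ) (Fin.last n).succ = x :=
        Fin.snoc_last _ _
      have hb : (Fin.snoc p.1.2 x : Fin (n+1+1) → Fin d → ℤ) (Fin.last n).castSucc
          = p.1.2 (Fin.last n) := Fin.snoc_castSucc _ _ _
      rw [ha, hb, p.2.2.1]
      intro hc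
      apply hne
      have := sub_eq_self.mp hc.symm
      exact this
    refine ⟨⟨h0, hlast, hstep, ?_⟩, hnotend⟩
    rw [loopcount_snoc, if_neg hnotend, add_zero, Fin.init_snoc]
    exact p.2.2.2.2⟩
  left_inv w := by
    obtain ⟨w, hw⟩ := w
    apply Subtype.ext
    show Fin.snoc (Fin.init w) x = w
    rw [← hw.1.2.1]
    exact Fin.snoc_init_self w
  right_inv p := by
    obtain ⟨⟨⟨e, he⟩, w'⟩, hp⟩ := p
    apply Subtype.ext
    refine Prod.ext ?_ ?_
    · apply Subtype.ext
      show x - (Fin.snoc w' x : Fin (n+1+1) → Fin d → ℤ) ((Fin.last n).castSucc) = e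
      have hp' : w' (Fin.last n) = x - e := hp.2.1
      rw [Fin.snoc_castSucc, hp', sub_sub_cancel]
    · show Fin.init (Fin.snoc w' x : Fin (n+1+1) → Fin d → ℤ) = w'
      funext i
      exact Fin.snoc_castSucc _ _ i

end BRW

namespace BRW

variable {d : ℕ}

lemma ncard_sigma {ι : Type*} [Fintype ι] (f : ι → Type*) [∀ i, Finite (f i)] :
    Nat.card ((i : ι) × f i) = ∑ i, Nat.card (f i) := by
  haveI : ∀ i, Fintype (f i) := fun i => Fintype.ofFinite _
  rw [Nat.card_eq_fintype_card, Fintype.card_sigma]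
  exact Finset.sum_congr rfl fun i _ => (Nat.card_eq_fintype_card).symm

lemma pathCount_split (n k : ℕ) (x : Fin d → ℤ) :
    pathCount d (n+1) k x
      = Nat.card {w : Fin (n+1+1) → Fin d → ℤ // PathProp d (n+1) k x w
            ∧ w (Fin.last n).succ = w (Fin.last n).castSucc}
        + Nat.card {w : Fin (n+1+1) → Fin d → ℤ // PathProp d (n+1) k x w
            ∧ ¬ (w (Fin.last n).succ = w (Fin.last n).castSucc)} := by
  rw [pathCount_def]
  haveI hfin : Finite {w : Fin (n+1+1) → Fin d → ℤ // PathProp d (n+1) k x w} :=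
    path_finite (n+1) k x
  haveI : Finite {w : Fin (n+1+1) → Fin d → ℤ // PathProp d (n+1) k x w
      ∧ w (Fin.last n).succ = w (Fin.last n).castSucc} :=
    Finite.of_injective
      (fun u => (⟨u.1, u.2.1⟩ : {w : Fin (n+1+1) → Fin d → ℤ // PathProp d (n+1) k x w}))
      (fun a b h => by
        apply Subtype.ext
        have h2 := congrArg Subtype.val h
        exact h2)
  haveI : Finite {w : Fin (n+1+1) → Fin d → ℤ // PathProp d (n+1) k x w
      ∧ ¬ (w (Fin.last n).succ = w (Fin.last n).castSucc)} :=
    Finite.of_injective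
      (fun u => (⟨u.1, u.2.1⟩ : {w : Fin (n+1+1) → Fin d → ℤ // PathProp d (n+1) k x w}))
      (fun a b h => by
        apply Subtype.ext
        have h2 := congrArg Subtype.val h
        exact h2)
  have e : {w : Fin (n+1+1) → Fin d → ℤ // PathProp d (n+1) k x w}
      ≃ {w : Fin (n+1+1) → Fin d → ℤ // PathProp d (n+1) k x w
            ∧ w (Fin.last n).succ = w (Fin.last n).castSucc}
        ⊕ {w : Fin (n+1+1) → Fin d → ℤ // PathProp d (n+1) k x w
            ∧ ¬ (w (Fin.last n).succ = w (Fin.last n).castSucc)} :=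
    ((Equiv.sumCompl (fun u : {w : Fin (n+1+1) → Fin d → ℤ // PathProp d (n+1) k x w} =>
        u.1 (Fin.last n).succ = u.1 (Fin.last n).castSucc)).symm.trans
      (Equiv.sumCongr
        (Equiv.subtypeSubtypeEquivSubtypeInter (PathProp d (n+1) k x)
          (fun w => w (Fin.last n).succ = w (Fin.last n).castSucc))
        (Equiv.subtypeSubtypeEquivSubtypeInter (PathProp d (n+1) k x)
          (fun w => ¬ w (Fin.last n).succ = w (Fin.last n).castSucc))))
  rw [Nat.card_congr e, Nat.card_sum]

lemma card_move (n k : ℕ) (x : Fin d → ℤ) :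
    Nat.card {w : Fin (n+1+1) → Fin d → ℤ // PathProp d (n+1) k x w
        ∧ ¬ (w (Fin.last n).succ = w (Fin.last n).castSucc)}
      = ∑ e ∈ unitVecs d, pathCount d n k (x - e) := by
  rw [Nat.card_congr (moveEquiv n k x)]
  rw [Nat.card_congr (Equiv.subtypeProdEquivSigmaSubtype
    (fun (a : ↥(unitVecs d)) (b : Fin (n+1) → Fin d → ℤ) =>
      PathProp d n k (x - (a : Fin d → ℤ)) b))]
  haveI : ∀ a : ↥(unitVecs d),
      Finite {b : Fin (n+1) → Fin d → ℤ // PathProp d n k (x - (a : Fin d → ℤ)) b} :=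
    fun a => path_finite n k _
  rw [ncard_sigma]
  rw [← Finset.sum_coe_sort (unitVecs d) (fun e => pathCount d n k (x - e))]
  rfl

lemma pathCount_succ_succ (n k : ℕ) (x : Fin d → ℤ) :
    pathCount d (n+1) (k+1) x
      = pathCount d n k x + ∑ e ∈ unitVecs d, pathCount d n (k+1) (x - e) := by
  rw [pathCount_split, card_move]
  congr 1
  rw [Nat.card_congr (loopEquiv n k x), pathCount_def]

lemma pathCount_succ_zero (n : ℕ) (x : Fin d → ℤ) :
    pathCount d (n+1) 0 x = ∑ e ∈ unitVecs d, pathCount d n 0 (x - e) := by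
  rw [pathCount_split, card_move]
  have hz : Nat.card {w : Fin (n+1+1) → Fin d → ℤ // PathProp d (n+1) 0 x w
      ∧ w (Fin.last n).succ = w (Fin.last n).castSucc} = 0 := by
    haveI : IsEmpty {w : Fin (n+1+1) → Fin d → ℤ // PathProp d (n+1) 0 x w
        ∧ w (Fin.last n).succ = w (Fin.last n).castSucc} := by
      constructor
      rintro ⟨w, ⟨-, -, -, hcount⟩, hL⟩
      have hls := loopcount_snoc w
      rw [hcount, if_pos hL] at hls
      omega
    exact Nat.card_of_isEmpty
  rw [hz, zero_add]

variable {phi lam : ℝ}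

lemma walkP_eq_sum (n : ℕ) (x : Fin d → ℤ) :
    ∑ k ∈ Finset.range (n+1), (pathCount d n k x : ℝ) * phi^k * lam^(n-k)
      = walkP d phi lam n x := by
  induction n generalizing x with
  | zero =>
    rw [Finset.sum_range_one, pathCount_zero_len]
    unfold walkP
    by_cases hx : x = 0
    · simp [hx]
    · simp [hx]
  | succ n ih =>
    rw [Finset.sum_range_succ']
    -- the k+1 terms
    have hterm : ∀ k, (pathCount d (n+1) (k+1) x : ℝ) * phi^(k+1) * lam^(n+1-(k+1))
        = (pathCount d n k x : ℝ) * phi^(k+1) * lam^(n-k)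
          + (∑ e ∈ unitVecs d, (pathCount d n (k+1) (x - e) : ℝ)) * phi^(k+1) * lam^(n-k) := by
      intro k
      rw [pathCount_succ_succ]
      have : n+1-(k+1) = n-k := by omega
      rw [this]
      push_cast
      ring
    rw [Finset.sum_congr rfl (fun k _ => hterm k), Finset.sum_add_distrib]
    -- first piece is phi * (IH x)
    have hfirst : ∑ k ∈ Finset.range (n+1), (pathCount d n k x : ℝ) * phi^(k+1) * lam^(n-k)
        = phi * walkP d phi lam n x := by
      rw [← ih x, Finset.mul_sum]
      apply Finset.sum_congr rfl
      intro k _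
      ring
    -- zero term
    have hzero : (pathCount d (n+1) 0 x : ℝ) * phi^0 * lam^(n+1-0)
        = ∑ e ∈ unitVecs d, (pathCount d n 0 (x - e) : ℝ) * phi^0 * lam^(n+1) := by
      rw [pathCount_succ_zero]
      push_cast
      rw [Finset.sum_mul, Finset.sum_mul]
    -- second piece reassembles
    have hsecond : (∑ k ∈ Finset.range (n+1),
          (∑ e ∈ unitVecs d, (pathCount d n (k+1) (x - e) : ℝ)) * phi^(k+1) * lam^(n-k))
          + (pathCount d (n+1) 0 x : ℝ) * phi^0 * lam^(n+1-0)
        = lam * ∑ e ∈ unitVecs d, walkP d phi lam n (x - e) := by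
      rw [hzero]
      have hsw : ∀ k ∈ Finset.range (n+1),
          (∑ e ∈ unitVecs d, (pathCount d n (k+1) (x - e) : ℝ)) * phi^(k+1) * lam^(n-k)
          = ∑ e ∈ unitVecs d, (pathCount d n (k+1) (x - e) : ℝ) * phi^(k+1) * lam^(n-k) := by
        intro k _
        rw [Finset.sum_mul, Finset.sum_mul]
      rw [Finset.sum_congr rfl hsw, Finset.sum_comm, ← Finset.sum_add_distrib]
      rw [Finset.mul_sum]
      apply Finset.sum_congr rfl
      intro e _
      -- ∑_k pc(n,k+1,x-e) φ^{k+1} λ^{n-k} + pc(n,0,x-e) λ^{n+1} = λ * walkP n (x-e)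
      rw [← ih (x - e)]
      rw [Finset.mul_sum]
      -- RHS: ∑_{k ∈ range (n+1)} λ * (pc φ^k λ^{n-k})
      -- LHS via sum_range_succ' on ∑_{k∈range(n+2)} pc φ^k λ^{n+1-k}... do directly:
      have expand : ∑ k ∈ Finset.range (n+1),
            lam * ((pathCount d n k (x - e) : ℝ) * phi^k * lam^(n-k))
          = ∑ k ∈ Finset.range (n+1),
            (pathCount d n k (x - e) : ℝ) * phi^k * lam^(n+1-k) := by
        apply Finset.sum_congr rfl
        intro k hk
        have hk' : k ≤ n := Nat.lt_succ_iff.mp (Finset.mem_range.mp hk)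
        have : n+1-k = (n-k)+1 := by omega
        rw [this]
        ring
      rw [expand]
      have hvan : pathCount d n (n+1) (x - e) = 0 := pathCount_vanish (by omega)
      rw [Finset.sum_range_succ
        (fun k => (pathCount d n (k+1) (x - e) : ℝ) * phi^(k+1) * lam^(n-k)) n,
        Finset.sum_range_succ'
        (fun k => (pathCount d n k (x - e) : ℝ) * phi^k * lam^(n+1-k)) n]
      have h1 : ∀ k ∈ Finset.range n, (pathCount d n (k+1) (x - e) : ℝ)
          * phi^(k+1) * lam^(n+1-(k+1)) = (pathCount d n (k+1) (x - e) : ℝ)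
          * phi^(k+1) * lam^(n-k) := by
        intro k _
        have hnk : n+1-(k+1) = n-k := by omega
        rw [hnk]
      rw [Finset.sum_congr rfl h1, hvan]
      have hz0 : n + 1 - 0 = n + 1 := rfl
      rw [hz0]
      push_cast
      ring
    rw [hfirst, add_assoc, hsecond]
    rfl

end BRW

namespace BRW

variable {d : ℕ} {phi lam : ℝ}

lemma walkP_le_mass (hphi : 0 ≤ phi) (hlam : 0 ≤ lam) (n : ℕ) (x : Fin d → ℤ) :
    walkP d phi lam n x ≤ (phi + 2*d*lam)^n := by
  by_cases h : walkP d phi lam n x = 0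
  · rw [h]; positivity
  · rw [← walkP_mass (d := d) (phi := phi) (lam := lam) n]
    exact Finset.single_le_sum (fun y _ => walkP_nonneg hphi hlam n y) (walkP_mem_box h)

lemma inner_eq (hphi : 0 ≤ phi) (hlam : 0 ≤ lam) (t : ℝ) (x : Fin d → ℤ) (m : ℕ) :
    ∑ k ∈ Finset.range (m - normOne x + 1),
        (pathCount d m k x : ℝ) * phi ^ k * lam ^ (m - k) * t ^ m / (Nat.factorial m)
      = walkP d phi lam m x * t ^ m / (Nat.factorial m) := by
  have hext : ∑ k ∈ Finset.range (m - normOne x + 1),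
        (pathCount d m k x : ℝ) * phi ^ k * lam ^ (m - k) * t ^ m / (Nat.factorial m)
      = ∑ k ∈ Finset.range (m + 1),
        (pathCount d m k x : ℝ) * phi ^ k * lam ^ (m - k) * t ^ m / (Nat.factorial m) := by
    apply Finset.sum_subset (Finset.range_subset_range.mpr (by omega))
    intro k hk hk2
    rw [Finset.mem_range] at hk hk2
    have hvan : pathCount d m k x = 0 := pathCount_vanish (by omega)
    rw [hvan]
    norm_num
  rw [hext, ← walkP_eq_sum (phi := phi) (lam := lam) m x, Finset.sum_mul, Finset.sum_div]

lemma summable_series (hphi : 0 ≤ phi) (hlam : 0 ≤ lam) (t : ℝ) (ht : 0 ≤ t)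
    (x : Fin d → ℤ) :
    Summable (fun m => walkP d phi lam m x * t ^ m / (Nat.factorial m)) := by
  have hrho : (0:ℝ) ≤ phi + 2*d*lam := by positivity
  apply Summable.of_nonneg_of_le
    (fun m => by
      have := walkP_nonneg (d := d) hphi hlam m x
      positivity)
    (fun m => ?_)
    (Real.summable_pow_div_factorial ((phi + 2*d*lam) * t))
  have h1 : walkP d phi lam m x * t ^ m ≤ ((phi + 2*d*lam) * t) ^ m := by
    rw [mul_pow]
    exact mul_le_mul_of_nonneg_right (walkP_le_mass hphi hlam m x) (pow_nonneg ht m)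
  exact div_le_div_of_nonneg_right h1 (by positivity)

lemma brw_ge (hphi : 0 ≤ phi) (hlam : 0 ≤ lam) (t : ℝ) (ht : 0 ≤ t) (x : Fin d → ℤ)
    (n : ℕ) :
    Real.exp (-t) * (walkP d phi lam n x * t ^ n / (Nat.factorial n))
      ≤ brwSeries d phi lam t x := by
  rw [brwSeries]
  have hcong : ∑' m : ℕ, ∑ k ∈ Finset.range (m - normOne x + 1),
        (pathCount d m k x : ℝ) * phi ^ k * lam ^ (m - k) * t ^ m / (Nat.factorial m)
      = ∑' m : ℕ, walkP d phi lam m x * t ^ m / (Nat.factorial m) :=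
    tsum_congr (fun m => inner_eq hphi hlam t x m)
  rw [hcong]
  apply mul_le_mul_of_nonneg_left ?_ (Real.exp_pos (-t)).le
  apply Summable.le_tsum (summable_series hphi hlam t ht x) n
  intro j _
  have := walkP_nonneg (d := d) hphi hlam j x
  positivity

lemma fact_le (n : ℕ) (hn : 1 ≤ n) :
    (Nat.factorial n : ℝ)
      ≤ Real.exp 1 * Real.sqrt n * ((n:ℝ) / Real.exp 1) ^ n := by
  obtain ⟨j, rfl⟩ : ∃ j, n = j + 1 := ⟨n - 1, by omega⟩
  have h1 : Stirling.stirlingSeq (j+1) ≤ Stirling.stirlingSeq 1 := by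
    have := Stirling.stirlingSeq'_antitone (Nat.zero_le j)
    simpa using this
  rw [Stirling.stirlingSeq_one] at h1
  unfold Stirling.stirlingSeq at h1
  have hX : (0:ℝ) < (((j+1:ℕ):ℝ)/Real.exp 1)^(j+1) := by positivity
  have hs1 : (0:ℝ) < Real.sqrt (2*((j+1:ℕ):ℝ)) := Real.sqrt_pos.mpr (by positivity)
  rw [div_le_div_iff₀ (by positivity) (by positivity : (0:ℝ) < Real.sqrt 2)] at h1
  rw [Real.sqrt_mul (by norm_num : (0:ℝ) ≤ 2) (((j+1:ℕ):ℝ))] at h1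
  have h2 : (0:ℝ) < Real.sqrt 2 := by positivity
  have h5 : Real.exp 1 * (Real.sqrt 2 * Real.sqrt ((j+1:ℕ):ℝ)
        * (((j+1:ℕ):ℝ)/Real.exp 1)^(j+1))
      = (Real.exp 1 * Real.sqrt ((j+1:ℕ):ℝ) * (((j+1:ℕ):ℝ)/Real.exp 1)^(j+1))
        * Real.sqrt 2 := by ring
  rw [h5] at h1
  exact le_of_mul_le_mul_right h1 h2

lemma exp_fact_bound (n : ℕ) (hn : 1 ≤ n) :
    1 / (Real.exp 1 * Real.sqrt n)
      ≤ Real.exp (-(n:ℝ)) * (n:ℝ)^n / (Nat.factorial n) := by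
  have hfact := fact_le n hn
  have hnpos : (0:ℝ) < n := by exact_mod_cast hn
  have hfpos : (0:ℝ) < (Nat.factorial n : ℝ) := by exact_mod_cast (Nat.factorial_pos n)
  have hE : (0:ℝ) < Real.exp 1 := Real.exp_pos 1
  have hs : (0:ℝ) < Real.sqrt n := Real.sqrt_pos.mpr hnpos
  rw [div_le_div_iff₀ (by positivity) hfpos]
  -- 1 * n! ≤ exp(-n) * n^n * (e * √n)
  have hpow : ((n:ℝ) / Real.exp 1) ^ n = (n:ℝ)^n / Real.exp n := by
    rw [div_pow, Real.exp_one_pow]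
  rw [hpow] at hfact
  have hexpn : (0:ℝ) < Real.exp (n:ℝ) := Real.exp_pos _
  have hneg : Real.exp (-(n:ℝ)) * Real.exp (n:ℝ) = 1 := by
    rw [← Real.exp_add]; simp
  -- from hfact : n! ≤ e√n * (n^n / exp n)
  have h3 : (Nat.factorial n : ℝ) * Real.exp (n:ℝ)
      ≤ Real.exp 1 * Real.sqrt n * (n:ℝ)^n := by
    calc (Nat.factorial n : ℝ) * Real.exp (n:ℝ)
        ≤ (Real.exp 1 * Real.sqrt n * ((n:ℝ)^n / Real.exp n)) * Real.exp (n:ℝ) :=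
          mul_le_mul_of_nonneg_right hfact hexpn.le
      _ = Real.exp 1 * Real.sqrt n * (n:ℝ)^n := by
          field_simp
  calc (1:ℝ) * (Nat.factorial n) = (Nat.factorial n : ℝ) := one_mul _
    _ = (Nat.factorial n : ℝ) * Real.exp (n:ℝ) * Real.exp (-(n:ℝ)) := by
        rw [mul_assoc, mul_comm (Real.exp (n:ℝ)), hneg, mul_one]
    _ ≤ Real.exp 1 * Real.sqrt n * (n:ℝ)^n * Real.exp (-(n:ℝ)) :=
        mul_le_mul_of_nonneg_right h3 (Real.exp_pos _).le
    _ = Real.exp (-(n:ℝ)) * (n:ℝ)^n * (Real.exp 1 * Real.sqrt n) := by ring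

lemma rpow_neg_half (dd n : ℕ) (hn : 1 ≤ n) :
    (n:ℝ) ^ (-(((dd : ℝ) + 1) / 2)) = ((Real.sqrt n)^(dd+1))⁻¹ := by
  have hn0 : (0:ℝ) < n := by exact_mod_cast hn
  rw [Real.rpow_neg hn0.le]
  congr 1
  rw [Real.sqrt_eq_rpow, ← Real.rpow_natCast ((n:ℝ) ^ ((1:ℝ)/2)) (dd+1),
    ← Real.rpow_mul hn0.le]
  congr 1
  push_cast
  ring

end BRW

namespace BRW

variable {d : ℕ} {phi lam : ℝ}

lemma main_lower (hphi : 0 < phi) (hlam : 0 < lam) (hsup : 1 < phi + 2*d*lam)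
    (x : Fin d → ℤ) (hx : normOne x = 1) (n : ℕ) (hn : 4 ≤ n) :
    (min lam (phi*lam) / ((phi+2*d*lam)^2 * 2 * 7^d * Real.exp 1))
      * (phi + 2*d*lam)^n * (n:ℝ)^(-(((d:ℝ)+1)/2)) ≤ brwSeries d phi lam n x := by
  have hphi' := hphi.le
  have hlam' := hlam.le
  have hrpos : (0:ℝ) < phi + 2*d*lam := lt_trans one_pos hsup
  set m : ℕ := (n-1)/2 with hm
  have hm1 : 1 ≤ m := by omega
  have hcase : n = m+m+1 ∨ n = m+m+2 := by omega
  have hstep_lam : ∀ j, lam * walkP d phi lam j 0 ≤ walkP d phi lam (j+1) x := by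
    intro j
    show lam * _ ≤ phi * walkP d phi lam j x
      + lam * ∑ e ∈ unitVecs d, walkP d phi lam j (x - e)
    have hxU : x ∈ unitVecs d := mem_unitVecs.mpr hx
    have h1 : walkP d phi lam j (x - x) ≤ ∑ e ∈ unitVecs d, walkP d phi lam j (x - e) :=
      Finset.single_le_sum (f := fun e => walkP d phi lam j (x - e))
        (fun e _ => walkP_nonneg hphi' hlam' j _) hxU
    rw [sub_self] at h1
    have h2 : 0 ≤ phi * walkP d phi lam j x :=
      mul_nonneg hphi' (walkP_nonneg hphi' hlam' j x)
    nlinarith [mul_le_mul_of_nonneg_left h1 hlam']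
  have hstep_phi : ∀ j (y : Fin d → ℤ),
      phi * walkP d phi lam j y ≤ walkP d phi lam (j+1) y := by
    intro j y
    show phi * _ ≤ phi * walkP d phi lam j y
      + lam * ∑ e ∈ unitVecs d, walkP d phi lam j (y - e)
    have h1 : 0 ≤ ∑ e ∈ unitVecs d, walkP d phi lam j (y - e) :=
      Finset.sum_nonneg fun e _ => walkP_nonneg hphi' hlam' j _
    nlinarith
  have hP0 : 0 ≤ walkP d phi lam (m+m) 0 := walkP_nonneg hphi' hlam' _ _
  have hW : min lam (phi*lam) * walkP d phi lam (m+m) 0 ≤ walkP d phi lam n x := by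
    rcases hcase with h | h
    · rw [h]
      calc min lam (phi*lam) * walkP d phi lam (m+m) 0
          ≤ lam * walkP d phi lam (m+m) 0 :=
            mul_le_mul_of_nonneg_right (min_le_left _ _) hP0
        _ ≤ walkP d phi lam (m+m+1) x := hstep_lam (m+m)
    · rw [h]
      calc min lam (phi*lam) * walkP d phi lam (m+m) 0
          ≤ phi * lam * walkP d phi lam (m+m) 0 :=
            mul_le_mul_of_nonneg_right (min_le_right _ _) hP0
        _ = phi * (lam * walkP d phi lam (m+m) 0) := by ring
        _ ≤ phi * walkP d phi lam (m+m+1) x :=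
            mul_le_mul_of_nonneg_left (hstep_lam (m+m)) hphi'
        _ ≤ walkP d phi lam (m+m+2) x := hstep_phi (m+m+1) x
  have hzero := walkP_zero_lb (d := d) hphi hlam m hm1
  have hρmm : (phi+2*d*lam)^n / (phi+2*d*lam)^2 ≤ (phi+2*d*lam)^(m+m) := by
    rw [div_le_iff₀ (by positivity)]
    calc (phi+2*d*lam)^n = (phi+2*d*lam)^((m+m) + (n - (m+m))) := by congr 1; omega
      _ = (phi+2*d*lam)^(m+m) * (phi+2*d*lam)^(n-(m+m)) := pow_add _ _ _
      _ ≤ (phi+2*d*lam)^(m+m) * (phi+2*d*lam)^2 := by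
          apply mul_le_mul_of_nonneg_left _ (pow_nonneg hrpos.le _)
          exact pow_le_pow_right₀ hsup.le (by omega)
  have hsqn : (0:ℝ) < Real.sqrt n := Real.sqrt_pos.mpr (by positivity)
  have hsqm : (0:ℝ) < Real.sqrt m := Real.sqrt_pos.mpr (by exact_mod_cast hm1)
  have hsqrt : (Real.sqrt m)^d ≤ (Real.sqrt n)^d :=
    pow_le_pow_left₀ hsqm.le (Real.sqrt_le_sqrt (by exact_mod_cast (by omega : m ≤ n))) d
  -- combined lower bound on walkP n x
  have hWlow : min lam (phi*lam) * (((phi+2*d*lam)^n / (phi+2*d*lam)^2)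
        / (2 * 7^d * (Real.sqrt n)^d)) ≤ walkP d phi lam n x := by
    have hd1 : ((phi+2*d*lam)^n / (phi+2*d*lam)^2) / (2 * 7^d * (Real.sqrt n)^d)
        ≤ (phi+2*d*lam)^(m+m) / (2 * ((7:ℝ) * Real.sqrt m)^d) := by
      apply div_le_div₀ (pow_nonneg hrpos.le _) hρmm (by positivity)
      rw [mul_pow]
      calc 2 * ((7:ℝ)^d * (Real.sqrt m)^d) ≤ 2 * ((7:ℝ)^d * (Real.sqrt n)^d) := by
            apply mul_le_mul_of_nonneg_left _ (by norm_num)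
            exact mul_le_mul_of_nonneg_left hsqrt (by positivity)
        _ = 2 * 7^d * (Real.sqrt n)^d := by ring
    calc min lam (phi*lam) * (((phi+2*d*lam)^n / (phi+2*d*lam)^2)
          / (2 * 7^d * (Real.sqrt n)^d))
        ≤ min lam (phi*lam) * ((phi+2*d*lam)^(m+m) / (2 * ((7:ℝ) * Real.sqrt m)^d)) := by
          apply mul_le_mul_of_nonneg_left hd1 (le_min hlam' (by positivity))
      _ ≤ min lam (phi*lam) * walkP d phi lam (m+m) 0 := by
          apply mul_le_mul_of_nonneg_left hzero (le_min hlam' (by positivity))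
      _ ≤ walkP d phi lam n x := hW
  -- series lower bound
  have hexp := exp_fact_bound n (by omega)
  have hbrw := brw_ge (d := d) hphi' hlam' (n:ℝ) (by positivity) x n
  set W := walkP d phi lam n x with hWdef
  set L1 := min lam (phi*lam) * (((phi+2*d*lam)^n / (phi+2*d*lam)^2)
      / (2 * 7^d * (Real.sqrt n)^d)) with hL1def
  set L2 := 1 / (Real.exp 1 * Real.sqrt n) with hL2def
  have hL1 : 0 ≤ L1 := by
    rw [hL1def]
    have : (0:ℝ) ≤ min lam (phi*lam) := le_min hlam' (by positivity)
    positivity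
  have hL2 : 0 ≤ L2 := by rw [hL2def]; positivity
  have hWnn : 0 ≤ W := walkP_nonneg hphi' hlam' n x
  have hmul : L1 * L2 ≤ W * (Real.exp (-(n:ℝ)) * (n:ℝ)^n / (Nat.factorial n)) :=
    mul_le_mul hWlow hexp hL2 hWnn
  have hfin : L1 * L2 ≤ brwSeries d phi lam n x := by
    apply le_trans hmul
    apply le_trans _ hbrw
    apply le_of_eq
    ring
  apply le_trans _ hfin
  rw [rpow_neg_half d n (by omega)]
  apply le_of_eq
  rw [hL1def, hL2def]
  have h7 : ((7:ℝ)^d) ≠ 0 := by positivity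
  have hE : Real.exp 1 ≠ 0 := (Real.exp_pos 1).ne'
  field_simp
  ring

end BRW


open BRW in
/-- If `φ̄ + 2dλ̄ > 1` and `|x| = 1`, then the branching random walk expectation satisfies
`m(n,x) ≥ C·(φ̄+2dλ̄)^n·n^{-(d+1)/2}` for large `n`; in particular `m(t,x) > 1` for some
`t > 0`. -/
theorem stmt12 (d : ℕ) (hd : 1 ≤ d) (phi lam : ℝ) (hphi : 0 < phi) (hlam : 0 < lam)
    (hsup : 1 < phi + 2 * d * lam) (x : Fin d → ℤ) (hx : normOne x = 1) :
    (∃ t > (0 : ℝ), 1 < brwSeries d phi lam t x) ∧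
    ∃ C > (0 : ℝ), ∃ n₀ : ℕ, ∀ n ≥ n₀,
      C * (phi + 2 * d * lam) ^ n * (n : ℝ) ^ (-(((d : ℝ) + 1) / 2)) ≤
        brwSeries d phi lam n x := by
  have hrpos : (0:ℝ) < phi + 2*d*lam := lt_trans one_pos hsup
  set C : ℝ := min lam (phi*lam) / ((phi+2*d*lam)^2 * 2 * 7^d * Real.exp 1) with hC
  have hCpos : 0 < C := by
    rw [hC]
    have h1 : 0 < min lam (phi*lam) := lt_min hlam (by positivity)
    positivity
  have hmain : ∀ n : ℕ, 4 ≤ n →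
      C * (phi + 2 * d * lam) ^ n * (n : ℝ) ^ (-(((d : ℝ) + 1) / 2)) ≤
        brwSeries d phi lam n x := fun n hn => main_lower hphi hlam hsup x hx n hn
  constructor
  · -- find n with value > 1
    have hsum : Summable (fun n : ℕ => ((n:ℝ))^(d+1) * ((phi+2*d*lam)⁻¹)^n) := by
      apply summable_pow_mul_geometric_of_norm_lt_one
      rw [Real.norm_eq_abs, abs_of_pos (by positivity)]
      rw [inv_lt_one_iff₀]
      right
      exact hsup
    have htend := hsum.tendsto_atTop_zero
    have hev := htend.eventually (gt_mem_nhds hCpos)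
    obtain ⟨N, hN⟩ := (Filter.eventually_atTop).mp hev
    set n : ℕ := max 4 N with hn
    have hn4 : 4 ≤ n := le_max_left _ _
    have hnN : N ≤ n := le_max_right _ _
    refine ⟨(n:ℝ), by positivity, ?_⟩
    have hbound := hmain n hn4
    have hkey : 1 < C * (phi + 2 * d * lam) ^ n * (n : ℝ) ^ (-(((d : ℝ) + 1) / 2)) := by
      have hlt := hN n hnN
      have hn1 : (1:ℝ) ≤ (n:ℝ) := by exact_mod_cast (by omega : 1 ≤ n)
      have hr1 : (n:ℝ) ^ (-(((d:ℝ)+1))) ≤ (n:ℝ) ^ (-(((d:ℝ)+1)/2)) := by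
        apply Real.rpow_le_rpow_of_exponent_le hn1
        have : (0:ℝ) ≤ (d:ℝ)+1 := by positivity
        linarith
      have hr2 : (n:ℝ) ^ (-(((d:ℝ)+1))) = (((n:ℝ))^(d+1))⁻¹ := by
        rw [Real.rpow_neg (by positivity)]
        congr 1
        rw [show ((d:ℝ)+1) = ((d+1 : ℕ):ℝ) by push_cast; ring, Real.rpow_natCast]
      have hstep : 1 < C * (phi + 2 * d * lam) ^ n * (((n:ℝ))^(d+1))⁻¹ := by
        have hpowpos : (0:ℝ) < ((n:ℝ))^(d+1) := by positivity
        have hρn : (0:ℝ) < (phi+2*d*lam)^n := by positivity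
        have hthis := hlt
        rw [inv_pow, ← div_eq_mul_inv, div_lt_iff₀ hρn] at hthis
        rw [← div_eq_mul_inv]
        exact (one_lt_div hpowpos).mpr hthis
      calc (1:ℝ) < C * (phi + 2 * d * lam) ^ n * (((n:ℝ))^(d+1))⁻¹ := hstep
        _ = C * (phi + 2 * d * lam) ^ n * (n:ℝ) ^ (-(((d:ℝ)+1))) := by rw [hr2]
        _ ≤ C * (phi + 2 * d * lam) ^ n * (n:ℝ) ^ (-(((d:ℝ)+1)/2)) := by
            apply mul_le_mul_of_nonneg_left hr1 (by positivity)
    exact lt_of_lt_of_le hkey hbound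
  · exact ⟨C, hCpos, 4, hmain⟩
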